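/- Let m, n, k ∈ ℕ, let S be an infinite set of monic polynomials in R = 𝔽_q[x], let N ∈ R with deg N = n, and let P/Q ∈ F^m_{k,S} with k ≤ n. Then the ball B(N·P/Q, q^{−1}) contains exactly one point of R_{<n}^m; moreover, for P/Q, A/B ∈ F^m_{k,S}, the balls B(P/Q, q^{−(n+1)}) and B(A/B, q^{−(n+1)}) are disjoint if and only if the balls B(N·P/Q, q^{−1}) and B(N·A/B, q^{−1}) are disjoint. -/

import Mathlib

open Polynomial MeasureTheory
open scoped Classical ENNReal NNReal

/- Setting: `Fq` is a finite field with `q` elements (`q` a prime power),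
`R = Fq[x]`, and `K_∞ = Fq((x⁻¹))` is realized as the field `LaurentSeries Fq`
of formal Laurent series in the variable `u = x⁻¹`. -/

variable (Fq : Type) [Field Fq] [Fintype Fq] [DecidableEq Fq]

/-- `K_∞ = 𝔽_q((x⁻¹))`, realized as Laurent series in the variable `u = x⁻¹`. -/
abbrev Kinf := LaurentSeries Fq

/-- The embedding of `R = 𝔽_q[x]` into `K_∞`, sending `x` to `u⁻¹`. -/
noncomputable def emb : Polynomial Fq →+* Kinf Fq :=
  (Polynomial.aeval ((HahnSeries.single (-1 : ℤ) (1 : Fq)) : LaurentSeries Fq)).toRingHom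

/-- `q`, as a nonnegative real number. -/
noncomputable def qc : NNReal := (Fintype.card Fq : NNReal)

/-- The absolute value `|α| = q^{-ord(α)}` on `K_∞` (so that `|f| = q^{deg f}` for a nonzero
polynomial `f ∈ 𝔽_q[x]`, since `f(u⁻¹)` has order `-deg f` as a Laurent series in `u`). -/
noncomputable def fabs (α : Kinf Fq) : NNReal :=
  if α = 0 then 0 else (qc Fq) ^ (-(HahnSeries.order α))

/-- The sup norm `‖v‖ = max_i |v_i|` on `K_∞^m`. -/
noncomputable def vnorm {m : ℕ} (v : Fin m → Kinf Fq) : NNReal :=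
  Finset.univ.sup fun i => fabs Fq (v i)

/-- The maximal ideal `𝔪 = {α ∈ K_∞ : |α| ≤ q⁻¹}`. -/
noncomputable def mfrak : Set (Kinf Fq) := {α | fabs Fq α ≤ (qc Fq)⁻¹}

/-- `𝔪^m ⊆ K_∞^m`. -/
noncomputable def mfrakV (m : ℕ) : Set (Fin m → Kinf Fq) := {α | ∀ i, α i ∈ mfrak Fq}

/-- `(P, Q)` is a primitive vector of `R^{m+1}`, i.e. `gcd(P₁, …, P_m, Q) = 1`:
every common divisor is a unit. -/
def Primitive {m : ℕ} (P : Fin m → Polynomial Fq) (Q : Polynomial Fq) : Prop :=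
  ∀ d : Polynomial Fq, d ∣ Q → (∀ i, d ∣ P i) → IsUnit d

/-- The point `P/Q ∈ K_∞^m` determined by `P ∈ R^m` and `Q ∈ R`. -/
noncomputable def ratV {m : ℕ} (P : Fin m → Polynomial Fq) (Q : Polynomial Fq) :
    Fin m → Kinf Fq := fun i => emb Fq (P i) / emb Fq Q

/-- `deg_{min,S}(α, q^{-n})`: the least `d` such that there is `(P,Q) ∈ R̂^{m+1}` with
`Q ∈ S`, `deg Q = d`, `‖P‖ < |Q|` and `‖α - P/Q‖ < q^{-n}`. -/
noncomputable def degMin (S : Set (Polynomial Fq)) (m n : ℕ) (α : Fin m → Kinf Fq) : ℕ :=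
  sInf {d : ℕ | ∃ (P : Fin m → Polynomial Fq) (Q : Polynomial Fq),
    Q ∈ S ∧ Q.natDegree = d ∧ Primitive Fq P Q ∧
    vnorm Fq (ratV Fq P 1) < fabs Fq (emb Fq Q) ∧
    vnorm Fq (α - ratV Fq P Q) < (qc Fq) ^ (-(n : ℤ))}

/-- `m_S(n) = min {k ≥ n : S ∩ R_{=k} ≠ ∅}`. -/
noncomputable def mS (S : Set (Polynomial Fq)) (n : ℕ) : ℕ :=
  sInf {k : ℕ | n ≤ k ∧ ∃ Q ∈ S, Q.natDegree = k}

/-- `d_{N,S}(a) = deg_{min,S}(a/N, q^{-deg N})`. -/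
noncomputable def dN (S : Set (Polynomial Fq)) (m : ℕ) (N : Polynomial Fq)
    (a : Fin m → Polynomial Fq) : ℕ :=
  degMin Fq S m N.natDegree (ratV Fq a N)

/-- `R_{<n}^m`, the set of vectors of polynomials of degree `< n`. -/
def polyVecLT (m n : ℕ) : Set (Fin m → Polynomial Fq) :=
  {a | ∀ i, (a i).degree < (n : ℕ)}

/-- The `S`-Farey fractions of degree at most `k` in `K_∞^m` (the zero vector is
included, as the fraction `0/1`). -/
noncomputable def Farey (S : Set (Polynomial Fq)) (m k : ℕ) : Set (Fin m → Kinf Fq) :=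
  {x | ∃ (P : Fin m → Polynomial Fq) (Q : Polynomial Fq), Q ∈ S ∧ Primitive Fq P Q ∧
    vnorm Fq (ratV Fq P 1) < fabs Fq (emb Fq Q) ∧ Q.natDegree ≤ k ∧ x = ratV Fq P Q}

/-- The (closed) ball `B(v, r) = {u ∈ K_∞^m : ‖v - u‖ ≤ r}`. -/
noncomputable def ball {m : ℕ} (v : Fin m → Kinf Fq) (r : NNReal) : Set (Fin m → Kinf Fq) :=
  {u | vnorm Fq (v - u) ≤ r}

/-- `Q` is the (unique monic) `S`-minimal denominator for `(α, q^{-n})`, i.e.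
`Q_{min,S}(α, q^{-n}) = Q`: `Q ∈ S`, `deg Q = deg_{min,S}(α, q^{-n})`, and there is
`P ∈ R^m` with `(P,Q) ∈ R̂^{m+1}` and `‖α - P/Q‖ < q^{-n}`. -/
noncomputable def IsMinDenom (S : Set (Polynomial Fq)) (m n : ℕ) (α : Fin m → Kinf Fq)
    (Q : Polynomial Fq) : Prop :=
  Q ∈ S ∧ Q.natDegree = degMin Fq S m n α ∧
    ∃ P : Fin m → Polynomial Fq, Primitive Fq P Q ∧
      vnorm Fq (α - ratV Fq P Q) < (qc Fq) ^ (-(n : ℤ))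

set_option linter.unusedSectionVars false

/-! ### Auxiliary lemmas -/

lemma one_lt_qc : 1 < qc Fq := by
  rw [qc]
  exact_mod_cast Fintype.one_lt_card

lemma qc_pos : 0 < qc Fq := lt_trans one_pos (one_lt_qc Fq)

lemma qc_ne_zero : qc Fq ≠ 0 := (qc_pos Fq).ne'

lemma fabs_zero : fabs Fq 0 = 0 := if_pos rfl

lemma fabs_eq_zero_iff (α : Kinf Fq) : fabs Fq α = 0 ↔ α = 0 := by
  unfold fabs
  split_ifs with h
  · simp [h]
  · simp [h, zpow_ne_zero _ (qc_ne_zero Fq)]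

lemma fabs_mul (α β : Kinf Fq) : fabs Fq (α * β) = fabs Fq α * fabs Fq β := by
  by_cases hα : α = 0
  · simp [hα, fabs_zero]
  by_cases hβ : β = 0
  · simp [hβ, fabs_zero]
  unfold fabs
  rw [if_neg hα, if_neg hβ, if_neg (mul_ne_zero hα hβ),
    HahnSeries.order_mul hα hβ, neg_add, zpow_add₀ (qc_ne_zero Fq)]

lemma fabs_neg (α : Kinf Fq) : fabs Fq (-α) = fabs Fq α := by
  unfold fabs
  rw [HahnSeries.order_neg]
  simp

lemma fabs_add_le (α β : Kinf Fq) :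
    fabs Fq (α + β) ≤ max (fabs Fq α) (fabs Fq β) := by
  by_cases h : α + β = 0
  · simp [h, fabs_zero]
  by_cases hα : α = 0
  · simp [hα]
  by_cases hβ : β = 0
  · simp [hβ]
  have hmin := HahnSeries.min_order_le_order_add h (x := α) (y := β)
  unfold fabs
  rw [if_neg h, if_neg hα, if_neg hβ]
  rcases le_total (HahnSeries.order α) (HahnSeries.order β) with hle | hle
  · rw [min_eq_left hle] at hmin
    exact le_max_of_le_left (zpow_le_zpow_right₀ (one_lt_qc Fq).le (by omega))
  · rw [min_eq_right hle] at hmin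
    exact le_max_of_le_right (zpow_le_zpow_right₀ (one_lt_qc Fq).le (by omega))

lemma fabs_div (α β : Kinf Fq) : fabs Fq (α / β) = fabs Fq α / fabs Fq β := by
  by_cases hβ : β = 0
  · simp [hβ, fabs_zero]
  have h0 : α / β * β = α := div_mul_cancel₀ α hβ
  have h2 := fabs_mul Fq (α / β) β
  rw [h0] at h2
  rw [h2, mul_div_assoc, div_self (fun hc => hβ ((fabs_eq_zero_iff Fq β).mp hc)), mul_one]

lemma emb_coeff (f : Polynomial Fq) (k : ℤ) :
    (emb Fq f).coeff k = if k ≤ 0 then f.coeff (-k).toNat else 0 := by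
  induction f using Polynomial.induction_on' with
  | add p q hp hq =>
    rw [map_add, HahnSeries.coeff_add, hp, hq]
    split_ifs <;> simp
  | monomial n a =>
    have h1 : emb Fq (monomial n a) = HahnSeries.single (-(n : ℤ)) a := by
      show Polynomial.aeval _ (monomial n a) = _
      rw [Polynomial.aeval_monomial, HahnSeries.single_pow]
      have ha : algebraMap Fq (Kinf Fq) a = HahnSeries.single (0 : ℤ) a := by
        rw [HahnSeries.algebraMap_apply']
        simp [PowerSeries.algebraMap_apply, HahnSeries.ofPowerSeries_C]
      rw [ha, HahnSeries.single_mul_single]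
      simp
    rw [h1, HahnSeries.coeff_single, Polynomial.coeff_monomial]
    split_ifs <;> first | rfl | (exfalso; omega)

lemma order_emb {f : Polynomial Fq} (hf : f ≠ 0) :
    emb Fq f ≠ 0 ∧ (emb Fq f).order = -(f.natDegree : ℤ) := by
  have hc : (emb Fq f).coeff (-(f.natDegree : ℤ)) ≠ 0 := by
    rw [emb_coeff]
    simpa using Polynomial.leadingCoeff_ne_zero.mpr hf
  have hne : emb Fq f ≠ 0 := fun h => by simp [h] at hc
  refine ⟨hne, le_antisymm (HahnSeries.order_le_of_coeff_ne_zero hc) ?_⟩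
  by_contra hlt
  push_neg at hlt
  have h0 := HahnSeries.coeff_order_eq_zero.not.mpr hne
  rw [emb_coeff] at h0
  by_cases hle : (emb Fq f).order ≤ 0
  · rw [if_pos hle] at h0
    exact h0 (Polynomial.coeff_eq_zero_of_natDegree_lt (by omega))
  · rw [if_neg hle] at h0
    exact h0 rfl

lemma emb_eq_zero_iff (f : Polynomial Fq) : emb Fq f = 0 ↔ f = 0 := by
  constructor
  · intro h
    by_contra hf
    exact (order_emb Fq hf).1 h
  · rintro rfl; exact map_zero _

lemma fabs_emb {f : Polynomial Fq} (hf : f ≠ 0) :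
    fabs Fq (emb Fq f) = qc Fq ^ (f.natDegree : ℤ) := by
  obtain ⟨hne, hord⟩ := order_emb Fq hf
  rw [fabs, if_neg hne, hord, neg_neg]

lemma one_le_fabs_emb {f : Polynomial Fq} (hf : f ≠ 0) : 1 ≤ fabs Fq (emb Fq f) := by
  rw [fabs_emb Fq hf]
  exact one_le_zpow₀ (one_lt_qc Fq).le (by positivity)

lemma vnorm_le_iff {m : ℕ} (v : Fin m → Kinf Fq) (r : NNReal) :
    vnorm Fq v ≤ r ↔ ∀ i, fabs Fq (v i) ≤ r := by
  simp [vnorm, Finset.sup_le_iff]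

lemma fabs_le_vnorm {m : ℕ} (v : Fin m → Kinf Fq) (i : Fin m) :
    fabs Fq (v i) ≤ vnorm Fq v := by
  unfold vnorm
  exact Finset.le_sup (f := fun j => fabs Fq (v j)) (Finset.mem_univ i)

lemma vnorm_zero {m : ℕ} : vnorm Fq (0 : Fin m → Kinf Fq) = 0 := by
  simp [vnorm, fabs_zero]

lemma vnorm_neg {m : ℕ} (v : Fin m → Kinf Fq) : vnorm Fq (-v) = vnorm Fq v := by
  unfold vnorm
  congr 1
  funext i
  rw [Pi.neg_apply, fabs_neg]

lemma vnorm_add_le {m : ℕ} (u v : Fin m → Kinf Fq) :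
    vnorm Fq (u + v) ≤ max (vnorm Fq u) (vnorm Fq v) := by
  rw [vnorm_le_iff]
  intro i
  exact (fabs_add_le Fq (u i) (v i)).trans
    (max_le_max (fabs_le_vnorm Fq u i) (fabs_le_vnorm Fq v i))

lemma vnorm_smul {m : ℕ} (c : Kinf Fq) (v : Fin m → Kinf Fq) :
    vnorm Fq (c • v) = fabs Fq c * vnorm Fq v := by
  have hmono : Monotone (fun x : NNReal => fabs Fq c * x) := fun _ _ h => mul_le_mul_right h _
  calc vnorm Fq (c • v) = Finset.univ.sup fun i => fabs Fq c * fabs Fq (v i) := by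
        unfold vnorm
        congr 1
        funext i
        rw [Pi.smul_apply, smul_eq_mul, fabs_mul]
    _ = fabs Fq c * vnorm Fq v := by
        rw [vnorm, Finset.comp_sup_eq_sup_comp (fun x : NNReal => fabs Fq c * x)
          (fun x y => hmono.map_max) (mul_zero _)]
        rfl

lemma disjoint_ball_iff {m : ℕ} (x y : Fin m → Kinf Fq) (r : NNReal) :
    Disjoint (ball Fq x r) (ball Fq y r) ↔ r < vnorm Fq (x - y) := by
  constructor
  · intro h
    by_contra hle
    push_neg at hle
    have hx : x ∈ ball Fq x r := by
      show vnorm Fq (x - x) ≤ r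
      rw [sub_self, vnorm_zero]
      exact zero_le
    have hy : x ∈ ball Fq y r := by
      show vnorm Fq (y - x) ≤ r
      rw [show y - x = -(x - y) by abel, vnorm_neg]
      exact hle
    exact Set.not_disjoint_iff.mpr ⟨x, hx, hy⟩ h
  · intro h
    rw [Set.disjoint_left]
    intro z hz hz'
    have hle : vnorm Fq (x - y) ≤ r := by
      have he : x - y = (x - z) + -(y - z) := by abel
      rw [he]
      refine (vnorm_add_le Fq _ _).trans (max_le hz ?_)
      rw [vnorm_neg]
      exact hz'
    exact absurd hle (not_le.mpr h)

/-- for `x = P/Q ∈ F^m_{k,S}` with `k ≤ n` and `deg N = n`, the ball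
`B(N·x, q⁻¹)` contains exactly one point of `R_{<n}^m`; moreover for `x, y ∈ F^m_{k,S}`,
the balls `B(x, q^{-(n+1)})` and `B(y, q^{-(n+1)})` are disjoint iff `B(N·x, q⁻¹)` and
`B(N·y, q⁻¹)` are disjoint. -/
theorem stmt16 (S : Set (Polynomial Fq)) (hSinf : S.Infinite) (hSmonic : ∀ Q ∈ S, Q.Monic)
    (m n k : ℕ) (hk : k ≤ n)
    (N : Polynomial Fq) (hN : N.degree = (n : WithBot ℕ))
    (x : Fin m → Kinf Fq) (hx : x ∈ Farey Fq S m k) :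
    (∃! a : Fin m → Polynomial Fq,
      a ∈ polyVecLT Fq m n ∧ ratV Fq a 1 ∈ ball Fq (emb Fq N • x) (qc Fq)⁻¹) ∧
    (∀ y ∈ Farey Fq S m k,
      (Disjoint (ball Fq x ((qc Fq) ^ (-(n + 1 : ℤ)))) (ball Fq y ((qc Fq) ^ (-(n + 1 : ℤ))))
        ↔ Disjoint (ball Fq (emb Fq N • x) (qc Fq)⁻¹) (ball Fq (emb Fq N • y) (qc Fq)⁻¹))) := by
  have hN0 : N ≠ 0 := fun h => by simp [h] at hN
  have hNdeg : N.natDegree = n := natDegree_eq_of_degree_eq_some hN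
  constructor
  · -- existence and uniqueness of the lattice point
    obtain ⟨P, Q, hQS, hprim, hPQ, hQk, rfl⟩ := hx
    have hQm : Q.Monic := hSmonic Q hQS
    have hQ0 : Q ≠ 0 := hQm.ne_zero
    have hQe : emb Fq Q ≠ 0 := fun h => hQ0 ((emb_eq_zero_iff Fq Q).mp h)
    set a : Fin m → Polynomial Fq := fun i => (N * P i) /ₘ Q with ha
    have hdeg : ∀ i, P i ≠ 0 → (P i).natDegree < Q.natDegree := by
      intro i hPi
      have h1 : fabs Fq (emb Fq (P i)) ≤ vnorm Fq (ratV Fq P 1) := by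
        have he : ratV Fq P 1 i = emb Fq (P i) := by simp [ratV]
        rw [← he]
        exact fabs_le_vnorm Fq _ i
      have h2 := lt_of_le_of_lt h1 hPQ
      rw [fabs_emb Fq hPi, fabs_emb Fq hQ0] at h2
      exact_mod_cast (zpow_lt_zpow_iff_right₀ (one_lt_qc Fq)).mp h2
    have hkey : ∀ i, (emb Fq N • ratV Fq P Q - ratV Fq a 1) i
        = emb Fq ((N * P i) %ₘ Q) / emb Fq Q := by
      intro i
      rw [Pi.sub_apply, Pi.smul_apply, smul_eq_mul]
      have he : ratV Fq a 1 i = emb Fq (a i) := by simp [ratV]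
      rw [he]
      show emb Fq N * (emb Fq (P i) / emb Fq Q) - emb Fq (a i) = _
      rw [eq_div_iff hQe, sub_mul, mul_assoc, div_mul_cancel₀ _ hQe,
        ← map_mul, ← map_mul, ← map_sub]
      congr 1
      have h := Polynomial.modByMonic_add_div (N * P i) Q
      rw [eq_sub_of_add_eq h]
      ring
    have hmem : ratV Fq a 1 ∈ ball Fq (emb Fq N • ratV Fq P Q) (qc Fq)⁻¹ := by
      show vnorm Fq (emb Fq N • ratV Fq P Q - ratV Fq a 1) ≤ (qc Fq)⁻¹
      rw [vnorm_le_iff]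
      intro i
      rw [hkey i, fabs_div]
      by_cases hr : (N * P i) %ₘ Q = 0
      · simp [hr, fabs_zero]
      · rw [fabs_emb Fq hr, fabs_emb Fq hQ0, ← zpow_sub₀ (qc_ne_zero Fq)]
        have hrQ : ((N * P i) %ₘ Q).natDegree < Q.natDegree :=
          Polynomial.natDegree_lt_natDegree hr (Polynomial.degree_modByMonic_lt (N * P i) hQm)
        calc (qc Fq) ^ ((((N * P i) %ₘ Q).natDegree : ℤ) - (Q.natDegree : ℤ))
            ≤ (qc Fq) ^ (-1 : ℤ) := zpow_le_zpow_right₀ (one_lt_qc Fq).le (by omega)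
          _ = (qc Fq)⁻¹ := zpow_neg_one _
    refine ⟨a, ⟨?_, hmem⟩, ?_⟩
    · -- degree bound
      intro i
      by_cases hPi : P i = 0
      · have : a i = 0 := by
          rw [ha]
          simp [hPi, Polynomial.zero_divByMonic]
        rw [this, Polynomial.degree_zero]
        exact WithBot.bot_lt_coe _
      · have h3 : (a i).natDegree < n := by
          have : a i = (N * P i) /ₘ Q := rfl
          rw [this, Polynomial.natDegree_divByMonic _ hQm,
            Polynomial.natDegree_mul hN0 hPi, hNdeg]
          have := hdeg i hPi
          have hQn : Q.natDegree ≤ n := le_trans hQk hk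
          omega
        by_cases hai : a i = 0
        · rw [hai, Polynomial.degree_zero]
          exact WithBot.bot_lt_coe _
        · calc (a i).degree ≤ ((a i).natDegree : WithBot ℕ) := Polynomial.degree_le_natDegree
            _ < (n : WithBot ℕ) := by exact_mod_cast h3
    · -- uniqueness
      rintro b ⟨hbLT, hb⟩
      funext i
      by_contra hne
      have hdiff : b i - a i ≠ 0 := sub_ne_zero_of_ne hne
      have h1 : fabs Fq (emb Fq (b i - a i)) ≤ (qc Fq)⁻¹ := by
        have hbmem : vnorm Fq (emb Fq N • ratV Fq P Q - ratV Fq b 1) ≤ (qc Fq)⁻¹ := hb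
        have e : ratV Fq b 1 - ratV Fq a 1
            = -(emb Fq N • ratV Fq P Q - ratV Fq b 1)
              + (emb Fq N • ratV Fq P Q - ratV Fq a 1) := by abel
        have hle : vnorm Fq (ratV Fq b 1 - ratV Fq a 1) ≤ (qc Fq)⁻¹ := by
          rw [e]
          refine (vnorm_add_le Fq _ _).trans (max_le ?_ hmem)
          rw [vnorm_neg]
          exact hbmem
        have hcomp : (ratV Fq b 1 - ratV Fq a 1) i = emb Fq (b i - a i) := by
          rw [Pi.sub_apply, map_sub]
          simp [ratV]
        calc fabs Fq (emb Fq (b i - a i)) = fabs Fq ((ratV Fq b 1 - ratV Fq a 1) i) := by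
              rw [hcomp]
          _ ≤ vnorm Fq (ratV Fq b 1 - ratV Fq a 1) := fabs_le_vnorm Fq _ i
          _ ≤ (qc Fq)⁻¹ := hle
      have h2 := one_le_fabs_emb Fq hdiff
      have h3 : (qc Fq)⁻¹ < 1 := by
        rw [inv_lt_one₀ (qc_pos Fq)]
        exact one_lt_qc Fq
      exact absurd (h2.trans h1) (not_le.mpr h3)
  · -- disjointness equivalence
    intro y hy
    rw [disjoint_ball_iff, disjoint_ball_iff]
    have hsmul : emb Fq N • x - emb Fq N • y = emb Fq N • (x - y) := by
      funext i
      simp [mul_sub]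
    rw [hsmul, vnorm_smul, fabs_emb Fq hN0, hNdeg]
    have hpos : (0 : NNReal) < (qc Fq) ^ (n : ℤ) := zpow_pos (qc_pos Fq) _
    have key : (qc Fq)⁻¹ = (qc Fq) ^ (n : ℤ) * (qc Fq) ^ (-(n + 1) : ℤ) := by
      rw [← zpow_add₀ (qc_ne_zero Fq)]
      norm_num
    rw [key]
    exact (mul_lt_mul_iff_right₀ hpos).symm
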